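/- Suppose p and q are Borel probability measures on ℝ^n, absolutely continuous with respect to Lebesgue measure, with density representatives ρ_p and ρ_q, and suppose there is a constant C > 1 such that 1/C < ρ_p(x) < C for every x ∈ supp(p) and ρ_p(x) = 0 for every x ∉ supp(p), and likewise 1/C < ρ_q(x) < C for every x ∈ supp(q) and ρ_q(x) = 0 for every x ∉ supp(q). Let f* be the optimal discriminator. Then (i) for every α with 0 < α < 1/(C² + 1), the pushforward measure f*♯q assigns measure zero to the interval (1 − α, 1], and (ii) (f*♯p)({1}) = p(supp(p) \ supp(q)). -/

import Mathlib

open MeasureTheory Metric Set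
open scoped ENNReal

noncomputable section

/-- The topological support of a Borel measure: the smallest closed set of full measure,
realized as the intersection of all closed sets whose complement is null. -/
def msupport {X : Type*} [TopologicalSpace X] [MeasurableSpace X] (μ : Measure X) : Set X :=
  ⋂₀ {S : Set X | IsClosed S ∧ μ Sᶜ = 0}

/-- The symmetric support difference (SSD) divergence
`D_△(p, q) = ∫ d(x, supp q) dp + ∫ d(x, supp p) dq` (valued in `ℝ≥0∞`). -/
def Dtri {X : Type*} [MeasurableSpace X] [PseudoMetricSpace X] (p q : Measure X) : ℝ≥0∞ :=
  (∫⁻ x, ENNReal.ofReal (infDist x (msupport q)) ∂p) +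
  (∫⁻ x, ENNReal.ofReal (infDist x (msupport p)) ∂q)

/-- The Wasserstein-1 distance: infimum of `∫ d(x, y) dγ` over couplings of `p` and `q`. -/
def DW {X : Type*} [MeasurableSpace X] [PseudoMetricSpace X] (p q : Measure X) : ℝ≥0∞ :=
  ⨅ γ ∈ {γ : Measure (X × X) | γ.map Prod.fst = p ∧ γ.map Prod.snd = q},
    ∫⁻ z, ENNReal.ofReal (dist z.1 z.2) ∂γ

/-- The β-admissible Wasserstein distance: infimum of `∫ d(x, y) dγ` over measures `γ`
whose first marginal is `p` and whose second marginal is `≤ (1 + β) • q`. -/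
def DWbeta {X : Type*} [MeasurableSpace X] [PseudoMetricSpace X]
    (β : ℝ) (p q : Measure X) : ℝ≥0∞ :=
  ⨅ γ ∈ {γ : Measure (X × X) |
      γ.map Prod.fst = p ∧ γ.map Prod.snd ≤ (ENNReal.ofReal (1 + β)) • q},
    ∫⁻ z, ENNReal.ofReal (dist z.1 z.2) ∂γ

/-- The symmetrized (β₁, β₂)-admissible Wasserstein distance. -/
def DWsym {X : Type*} [MeasurableSpace X] [PseudoMetricSpace X]
    (β₁ β₂ : ℝ) (p q : Measure X) : ℝ≥0∞ :=
  DWbeta β₁ p q + DWbeta β₂ q p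

/-- With bounded densities: (i) the pushforward of `q` under the optimal
discriminator puts no mass on `(1 − α, 1]` for `0 < α < 1/(C² + 1)`; and
(ii) `(f*♯p)({1}) = p(supp p \ supp q)`. -/
theorem pushforward_extreme_values (n : ℕ)
    (p q : Measure (EuclideanSpace ℝ (Fin n)))
    [IsProbabilityMeasure p] [IsProbabilityMeasure q]
    (ρp ρq : EuclideanSpace ℝ (Fin n) → ℝ)
    (hρp_meas : Measurable ρp) (hρq_meas : Measurable ρq)
    (hp : p = volume.withDensity (fun x => ENNReal.ofReal (ρp x)))
    (hq : q = volume.withDensity (fun x => ENNReal.ofReal (ρq x)))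
    (C : ℝ) (hC : 1 < C)
    (hρp_bound : ∀ x ∈ msupport p, 1 / C < ρp x ∧ ρp x < C)
    (hρp_zero : ∀ x ∉ msupport p, ρp x = 0)
    (hρq_bound : ∀ x ∈ msupport q, 1 / C < ρq x ∧ ρq x < C)
    (hρq_zero : ∀ x ∉ msupport q, ρq x = 0)
    (fstar : EuclideanSpace ℝ (Fin n) → ℝ)
    (hfstar : ∀ x, fstar x =
      if 0 < ρp x + ρq x then ρp x / (ρp x + ρq x) else 1 / 2) :
    (∀ α : ℝ, 0 < α → α < 1 / (C ^ 2 + 1) →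
      (q.map fstar) (Set.Ioc (1 - α) 1) = 0) ∧
    (p.map fstar) {1} = p (msupport p \ msupport q) := by
  have hC0 : (0:ℝ) < C := lt_trans one_pos hC
  have hρp_nonneg : ∀ x, 0 ≤ ρp x := by
    intro x
    by_cases hx : x ∈ msupport p
    · exact le_of_lt (lt_trans (by positivity) (hρp_bound x hx).1)
    · exact le_of_eq (hρp_zero x hx).symm
  have hρq_nonneg : ∀ x, 0 ≤ ρq x := by
    intro x
    by_cases hx : x ∈ msupport q
    · exact le_of_lt (lt_trans (by positivity) (hρq_bound x hx).1)
    · exact le_of_eq (hρq_zero x hx).symm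
  have hfm : Measurable fstar := by
    have hfe : fstar = fun x => if 0 < ρp x + ρq x then ρp x / (ρp x + ρq x) else 1 / 2 :=
      funext hfstar
    rw [hfe]
    exact Measurable.ite (measurableSet_lt measurable_const (hρp_meas.add hρq_meas))
      (hρp_meas.div (hρp_meas.add hρq_meas)) measurable_const
  constructor
  · intro α hα hαC
    have hα' : α * (C ^ 2 + 1) < 1 := by
      rw [lt_div_iff₀ (by positivity)] at hαC; linarith
    rw [Measure.map_apply hfm measurableSet_Ioc, hq,
      withDensity_apply _ (hfm measurableSet_Ioc)]
    have h0 : ∀ x ∈ fstar ⁻¹' Set.Ioc (1 - α) 1, ρq x = 0 := by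
      intro x hx
      by_contra hq0
      have hxq : x ∈ msupport q := by
        by_contra hxq; exact hq0 (hρq_zero x hxq)
      have hq1 : 1 / C < ρq x := (hρq_bound x hxq).1
      have hq2 : ρq x < C := (hρq_bound x hxq).2
      have hpC : ρp x < C := by
        by_cases hxp : x ∈ msupport p
        · exact (hρp_bound x hxp).2
        · rw [hρp_zero x hxp]; exact hC0
      have hpos : 0 < ρp x + ρq x := by
        have := hρp_nonneg x
        have : 0 < ρq x := lt_trans (by positivity) hq1
        linarith [hρp_nonneg x]
      have hmem : 1 - α < fstar x := hx.1
      rw [hfstar x, if_pos hpos] at hmem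
      have key : (1 - α) * (ρp x + ρq x) < ρp x := (lt_div_iff₀ hpos).mp hmem
      have h1C : 1 / C * C = 1 := by field_simp
      nlinarith [mul_pos hα hC0, hρp_nonneg x, mul_lt_mul_of_pos_left hpC hα,
        mul_lt_mul_of_pos_right hq1 hα]
    calc (∫⁻ x in fstar ⁻¹' Set.Ioc (1 - α) 1, ENNReal.ofReal (ρq x) ∂volume)
        = ∫⁻ _ in fstar ⁻¹' Set.Ioc (1 - α) 1, 0 ∂volume := by
          refine setLIntegral_congr_fun (hfm measurableSet_Ioc) ?_
          intro x hx; simp [h0 x hx]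
      _ = 0 := lintegral_zero
  · have hset : fstar ⁻¹' {1} = msupport p \ msupport q := by
      ext x
      simp only [Set.mem_preimage, Set.mem_singleton_iff, Set.mem_diff]
      rw [hfstar x]
      constructor
      · intro h
        split_ifs at h with hpos
        · have heq : ρp x = ρp x + ρq x := by
            field_simp at h; linarith
          have hq0 : ρq x = 0 := by linarith
          have hp0 : 0 < ρp x := by linarith
          refine ⟨?_, ?_⟩
          · by_contra hx; exact absurd (hρp_zero x hx) (ne_of_gt hp0)
          · intro hx
            have := (hρq_bound x hx).1
            have : (0:ℝ) < ρq x := lt_trans (by positivity) this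
            linarith
        · norm_num at h
      · rintro ⟨hxp, hxq⟩
        have hp0 : 0 < ρp x := lt_trans (by positivity) (hρp_bound x hxp).1
        have hq0 : ρq x = 0 := hρq_zero x hxq
        rw [if_pos (by linarith), hq0, add_zero, div_self (ne_of_gt hp0)]
    rw [Measure.map_apply hfm (measurableSet_singleton 1), hset]
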